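/- Let X be a finite multiset of positive integers, each at most t, where t is a positive integer, and let 0 < ε. Let Y* ⊆ X be a subset maximizing Σ(Y*) subject to Σ(Y*) ≤ t, and assume Σ(Y*) ≥ t/2. Suppose a set S̃ of integers approximates S_X[0, t] with additive error ε·t, and let s̃ be the maximum element of S̃[0, (1+ε)t] (this set is nonempty). Then there exists a subset Y ⊆ X such that (1 − 4ε)·Σ(Y*) ≤ Σ(Y) ≤ (1 + 2ε)·t. -/

import Mathlib

/-- `ApproximatesWithin S̃ S w v δ` : the set `S̃` of integers approximates
`S[w,v] = {s ∈ S : w ≤ s ≤ v}` with additive error `δ`. -/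
def ApproximatesWithin (St S : Set ℤ) (w v δ : ℝ) : Prop :=
  (∀ s ∈ S, w ≤ (s : ℝ) → (s : ℝ) ≤ v →
    ∃ t ∈ St, (s : ℝ) - δ ≤ (t : ℝ) ∧ (t : ℝ) ≤ (s : ℝ) + δ) ∧
  (∀ t ∈ St, ∃ s ∈ S, (t : ℝ) - δ ≤ (s : ℝ) ∧ (s : ℝ) ≤ (t : ℝ) + δ)

/-- The set of all subset sums of a multiset of integers. -/
def SubsetSums (X : Multiset ℤ) : Set ℤ := {s : ℤ | ∃ Y ≤ X, Y.sum = s}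

/-- **From an approximate set of sums to an approximate solution value.** Let `X` be a multiset
of positive integers each at most `t`, let `ε > 0`, and let `Y*` be an optimal solution of the
Subset Sum instance `(X, t)` (maximizing `Σ(Y*) ≤ t`) with `Σ(Y*) ≥ t/2`. If `S̃` approximates
`S_X[0, t]` with additive error `ε·t` and `stilde` is the maximum element of `S̃[0, (1+ε)·t]`
(this set being nonempty), then there is `Y ⊆ X` with
`(1 − 4ε)·Σ(Y*) ≤ Σ(Y) ≤ (1 + 2ε)·t`. -/
theorem stmt12 (t : ℤ) (ht : 0 < t) (X : Multiset ℤ)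
    (hX : ∀ x ∈ X, 0 < x ∧ x ≤ t)
    (ε : ℝ) (hε : 0 < ε)
    (Ystar : Multiset ℤ) (hYsub : Ystar ≤ X) (hYle : Ystar.sum ≤ t)
    (hYopt : ∀ Y : Multiset ℤ, Y ≤ X → Y.sum ≤ t → Y.sum ≤ Ystar.sum)
    (hYhalf : (t : ℝ) / 2 ≤ (Ystar.sum : ℝ))
    (St : Set ℤ)
    (happrox : ApproximatesWithin St (SubsetSums X) 0 (t : ℝ) (ε * t))
    (stilde : ℤ) (hstildemem : stilde ∈ St) (hstildelb : 0 ≤ (stilde : ℝ)) (hstildeub : (stilde : ℝ) ≤ (1 + ε) * t)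
    (hstildemax : ∀ s ∈ St, 0 ≤ (s : ℝ) → (s : ℝ) ≤ (1 + ε) * t → s ≤ stilde) :
    ∃ Y : Multiset ℤ, Y ≤ X ∧
      (1 - 4 * ε) * (Ystar.sum : ℝ) ≤ (Y.sum : ℝ) ∧
      (Y.sum : ℝ) ≤ (1 + 2 * ε) * t := by
  have htR : (0:ℝ) < (t:ℝ) := by exact_mod_cast ht
  have hYpos : (0:ℝ) < (Ystar.sum : ℝ) := lt_of_lt_of_le (by linarith) hYhalf
  by_cases hec : (1:ℝ)/4 ≤ ε
  · refine ⟨0, Multiset.zero_le X, ?_, ?_⟩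
    · simp only [Multiset.sum_zero, Int.cast_zero]
      nlinarith
    · simp only [Multiset.sum_zero, Int.cast_zero]
      positivity
  · push_neg at hec
    -- stilde corresponds to some real subset sum s
    obtain ⟨s, hsmem, hs1, hs2⟩ := happrox.2 stilde hstildemem
    obtain ⟨Y, hYX, hYsum⟩ := hsmem
    -- Ystar.sum is in SubsetSums X within [0,t], get approximator s'
    have hYstarmem : Ystar.sum ∈ SubsetSums X := ⟨Ystar, hYsub, rfl⟩
    obtain ⟨s', hs'mem, hs'1, hs'2⟩ := happrox.1 Ystar.sum hYstarmem
      (le_of_lt hYpos) (by exact_mod_cast hYle)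
    have hYleR : (Ystar.sum : ℝ) ≤ t := by exact_mod_cast hYle
    have hs'lb : (0:ℝ) ≤ (s' : ℝ) := by nlinarith
    have hs'ub : (s' : ℝ) ≤ (1 + ε) * t := by nlinarith
    have hmax : (s' : ℝ) ≤ (stilde : ℝ) := by
      exact_mod_cast hstildemax s' hs'mem hs'lb hs'ub
    refine ⟨Y, hYX, ?_, ?_⟩
    · rw [hYsum]; nlinarith
    · rw [hYsum]; nlinarith
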